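/- Let H be a Hilbert space and T₁, …, T_d ∈ B(H) bounded operators. Then the following are equivalent: (1) each Tᵢ is injective and the ranges of the Tᵢ are linearly independent subspaces (i.e., if vᵢ ∈ ran(Tᵢ) with v₁ + ⋯ + v_d = 0 then all vᵢ = 0); (2) the only solution in operators W₁, …, W_d ∈ B(H) to T₁W₁ + ⋯ + T_dW_d = 0 is W₁ = ⋯ = W_d = 0. -/

import Mathlib

open ContinuousLinearMap

/-- Lemma 2.7: each `Tᵢ` injective with linearly independent ranges iff the only
operator solution of `∑ Tᵢ Wᵢ = 0` is `Wᵢ = 0` for all `i`. -/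
theorem stmt_0 {H : Type*} [NormedAddCommGroup H] [InnerProductSpace ℂ H]
    [CompleteSpace H] (d : ℕ) (T : Fin d → H →L[ℂ] H) :
    ((∀ i, Function.Injective (T i)) ∧
      (∀ v : Fin d → H, (∀ i, v i ∈ Set.range (T i)) → ∑ i, v i = 0 → ∀ i, v i = 0))
    ↔
    (∀ W : Fin d → H →L[ℂ] H, ∑ i, (T i) ∘L (W i) = 0 → ∀ i, W i = 0) := by
  constructor
  · rintro ⟨hinj, hind⟩ W hW i
    ext x
    have h : ∑ j, T j (W j x) = 0 := by
      have := congrArg (fun f : H →L[ℂ] H => f x) hW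
      simpa using this
    have h2 := hind (fun j => T j (W j x)) (fun j => ⟨W j x, rfl⟩) h i
    have := hinj i (show T i (W i x) = T i 0 by simpa using h2)
    simpa using this
  · intro h2
    constructor
    · intro i
      rw [injective_iff_map_eq_zero]
      intro x hx
      by_contra hx0
      set W : Fin d → H →L[ℂ] H :=
        fun j => if j = i then ((innerSL ℂ x).smulRight x) else 0 with hWdef
      have hsum : ∑ j, T j ∘L W j = 0 := by
        ext y
        have : ∀ j, (T j ∘L W j) y = if j = i then (inner ℂ x y : ℂ) • T i x else 0 := by
          intro j
          by_cases hj : j = i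
          · subst hj; simp [hWdef]
          · simp [hWdef, hj]
        simp only [ContinuousLinearMap.comp_apply] at this
        simp [this, hx]
      have hWi := h2 W hsum i
      have : (inner ℂ x x : ℂ) • x = 0 := by
        have := congrArg (fun f : H →L[ℂ] H => f x) hWi
        simpa [hWdef] using this
      rcases smul_eq_zero.mp this with h | h
      · exact hx0 (inner_self_eq_zero.mp h)
      · exact hx0 h
    · intro v hv hsum i
      by_cases hH : ∀ x : H, x = 0
      · exact hH _
      push_neg at hH
      obtain ⟨e, he⟩ := hH
      choose u hu using hv
      set W : Fin d → H →L[ℂ] H := fun j => (innerSL ℂ e).smulRight (u j) with hWdef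
      have hsum' : ∑ j, T j ∘L W j = 0 := by
        ext y
        have : ∀ j, (T j ∘L W j) y = (inner ℂ e y : ℂ) • v j := by
          intro j
          simp [hWdef, hu]
        rw [ContinuousLinearMap.sum_apply]
        simp only [this]
        rw [← Finset.smul_sum, hsum, smul_zero]
        simp
      have hWi := h2 W hsum' i
      have h0 : (inner ℂ e e : ℂ) • u i = 0 := by
        have := congrArg (fun f : H →L[ℂ] H => f e) hWi
        simpa [hWdef] using this
      rcases smul_eq_zero.mp h0 with h | h
      · exact absurd (inner_self_eq_zero.mp h) he
      · rw [← hu i, h, map_zero]
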